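/- Let I be a two-valued interpretation of an extended logic program P. Then an objective literal L is in Γ_s(I) (the Γ operator of the semi-normal program P_s) if and only if there exists an argument A with conclusion L such that assm(A) ⊆ I and no explicit negation of a conclusion of A is in I (¬conc(A) ∩ I = ∅). -/

import Mathlib

/-- Objective literals: atoms and their explicit negations. -/
inductive Lit : Type where
  | pos : String → Lit
  | neg : String → Lit
deriving DecidableEq

/-- Explicit negation of an objective literal (`¬¬L = L`). -/
def Lit.compl : Lit → Lit
  | .pos a => .neg a
  | .neg a => .pos a

/-- A rule `head ← pos, not neg` of an extended logic program:
`pos` are the objective body literals and `neg` the default-negated ones. -/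
structure Rule where
  head : Lit
  pos : List Lit
  neg : List Lit

/-- An extended logic program is a set of rules. -/
abbrev Program := Set Rule

/-- An argument for `P`: a finite sequence of rules of `P` such that every
objective literal in the body of a rule is the head of a later rule. -/
def IsArg (P : Program) (A : List Rule) : Prop :=
  (∀ r ∈ A, r ∈ P) ∧
  ∀ i : Fin A.length, ∀ L ∈ (A.get i).pos,
    ∃ k : Fin A.length, i < k ∧ (A.get k).head = L

/-- The conclusions of an argument: the heads of its rules. -/
def conc (A : List Rule) : Set Lit := {L | ∃ r ∈ A, r.head = L}

/-- The assumptions of an argument: the objective literals `L` such that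
`not L` occurs in the body of one of its rules. -/
def assm (A : List Rule) : Set Lit := {L | ∃ r ∈ A, L ∈ r.neg}

/-- `A` is a minimal argument for `L`: no proper subargument of `A` has
conclusion `L`. -/
def MinimalForArg (P : Program) (A : List Rule) (L : Lit) : Prop :=
  IsArg P A ∧ L ∈ conc A ∧
  ∀ B : List Rule, B.Sublist A → B ≠ A → IsArg P B → L ∉ conc B

/-- The set of minimal arguments of `P`. -/
def Args (P : Program) : Type := {A : List Rule // ∃ L, MinimalForArg P A L}

/-- `A` undercuts `B`: some conclusion `L` of `A` is an assumption `not L` of `B`. -/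
def undercuts {P : Program} (A B : Args P) : Prop :=
  ∃ L, L ∈ conc A.1 ∧ L ∈ assm B.1

/-- `A` rebuts `B`: some conclusion `L` of `A` has `¬L` a conclusion of `B`. -/
def rebuts {P : Program} (A B : Args P) : Prop :=
  ∃ L, L ∈ conc A.1 ∧ L.compl ∈ conc B.1

/-- `A` attacks `B` iff `A` undercuts or rebuts `B`. -/
def attacks {P : Program} (A B : Args P) : Prop := undercuts A B ∨ rebuts A B

/-- `A` defeats `B` iff `A` undercuts `B`, or `A` rebuts `B` and `B` does not
undercut `A`. -/
def defeats {P : Program} (A B : Args P) : Prop :=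
  undercuts A B ∨ (rebuts A B ∧ ¬ undercuts B A)

/-- `A` strongly undercuts `B` iff `A` undercuts `B` and `B` does not undercut `A`. -/
def sundercuts {P : Program} (A B : Args P) : Prop :=
  undercuts A B ∧ ¬ undercuts B A

/-- The set of `x/y`-acceptable arguments with respect to `S`. -/
def Facc {Arg : Type*} (x y : Arg → Arg → Prop) (S : Set Arg) : Set Arg :=
  {A | ∀ B, x B A → ∃ C ∈ S, y C B}

theorem Facc_mono {Arg : Type*} (x y : Arg → Arg → Prop) : Monotone (Facc x y) := by
  intro S T hST A hA B hB
  obtain ⟨C, hC, hCB⟩ := hA B hB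
  exact ⟨C, hST hC, hCB⟩

/-- `Facc` as an order homomorphism. -/
def Fhom {Arg : Type*} (x y : Arg → Arg → Prop) : Set Arg →o Set Arg :=
  ⟨Facc x y, Facc_mono x y⟩

/-- The set of `x/y`-justified arguments. -/
def Jlfp {Arg : Type*} (x y : Arg → Arg → Prop) : Set Arg :=
  OrderHom.lfp (Fhom x y)

/-- Derivability in the least model of the GL-transformation `P/I`:
rules whose default-negated body literals avoid `I` may fire. -/
inductive GammaDeriv (P : Program) (I : Set Lit) : Lit → Prop where
  | step (r : Rule) (hr : r ∈ P) (hneg : ∀ L ∈ r.neg, L ∉ I)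
      (hpos : ∀ L ∈ r.pos, GammaDeriv P I L) : GammaDeriv P I r.head

/-- The Gelfond–Lifschitz operator `Γ_P`. -/
def Gamma (P : Program) (I : Set Lit) : Set Lit := {L | GammaDeriv P I L}

/-- The semi-normal version of `P`: each rule `L ← Body` becomes
`L ← not ¬L, Body`. -/
def seminormal (P : Program) : Program :=
  {r' | ∃ r ∈ P, r' = ⟨r.head, r.pos, r.head.compl :: r.neg⟩}

/-- `Γ_s`, the `Γ` operator of the semi-normal program. -/
def GammaS (P : Program) (I : Set Lit) : Set Lit := Gamma (seminormal P) I

theorem Gamma_anti (P : Program) : ∀ {I I' : Set Lit}, I ⊆ I' → Gamma P I' ⊆ Gamma P I := by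
  intro I I' h L hL
  induction hL with
  | step r hr hneg hpos ih =>
      exact GammaDeriv.step r hr (fun L hL hI => hneg L hL (h hI)) ih

/-- The monotone operator `I ↦ Γ_P (Γ_Q I)`. -/
def GammaComp (P Q : Program) : Set Lit →o Set Lit :=
  ⟨fun I => Gamma P (Gamma Q I), fun _ _ h => Gamma_anti P (Gamma_anti Q h)⟩

/-- `IsArg` reformulated with `getElem`. -/
lemma isArg_iff (P : Program) (A : List Rule) :
    IsArg P A ↔ (∀ r ∈ A, r ∈ P) ∧
      ∀ i (hi : i < A.length), ∀ L ∈ A[i].pos,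
        ∃ k, ∃ hk : k < A.length, i < k ∧ A[k].head = L := by
  constructor
  · rintro ⟨h1, h2⟩
    refine ⟨h1, fun i hi L hL => ?_⟩
    obtain ⟨k, hik, hk⟩ := h2 ⟨i, hi⟩ L hL
    exact ⟨k.1, k.2, hik, hk⟩
  · rintro ⟨h1, h2⟩
    refine ⟨h1, fun i L hL => ?_⟩
    obtain ⟨k, hk, hik, h⟩ := h2 i.1 i.2 L hL
    exact ⟨⟨k, hk⟩, hik, h⟩

lemma isArg_append {P : Program} {A B : List Rule}
    (hA : IsArg P A) (hB : IsArg P B) : IsArg P (A ++ B) := by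
  rw [isArg_iff] at *
  obtain ⟨hA1, hA2⟩ := hA
  obtain ⟨hB1, hB2⟩ := hB
  refine ⟨?_, ?_⟩
  · intro r hr
    rcases List.mem_append.mp hr with h | h
    · exact hA1 r h
    · exact hB1 r h
  · intro i hi L hL
    rw [List.length_append] at hi
    by_cases h : i < A.length
    · rw [List.getElem_append_left h] at hL
      obtain ⟨k, hk, hik, hkL⟩ := hA2 i h L hL
      refine ⟨k, by simp; omega, hik, ?_⟩
      rwa [List.getElem_append_left hk]
    · have h' : i - A.length < B.length := by omega
      rw [List.getElem_append_right (by omega)] at hL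
      obtain ⟨k, hk, hik, hkL⟩ := hB2 (i - A.length) h' L hL
      refine ⟨A.length + k, by simp; omega, by omega, ?_⟩
      rw [List.getElem_append_right (by omega)]
      simpa using hkL

lemma isArg_cons {P : Program} {A : List Rule} {r : Rule}
    (hr : r ∈ P) (hpos : ∀ L ∈ r.pos, L ∈ conc A) (hA : IsArg P A) :
    IsArg P (r :: A) := by
  rw [isArg_iff] at *
  obtain ⟨hA1, hA2⟩ := hA
  refine ⟨?_, ?_⟩
  · intro s hs
    rcases List.mem_cons.mp hs with h | h
    · exact h ▸ hr
    · exact hA1 s h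
  · intro i hi L hL
    match i with
    | 0 =>
        simp only [List.getElem_cons_zero] at hL
        obtain ⟨s, hs, hsh⟩ := hpos L hL
        obtain ⟨j, hj, hjs⟩ := List.mem_iff_getElem.mp hs
        refine ⟨j + 1, by simpa using Nat.succ_lt_succ hj, by omega, ?_⟩
        simp [List.getElem_cons_succ, hjs, hsh]
    | i + 1 =>
        simp only [List.getElem_cons_succ] at hL
        have hi' : i < A.length := by simpa using Nat.lt_of_succ_lt_succ hi
        obtain ⟨k, hk, hik, hkL⟩ := hA2 i hi' L hL
        exact ⟨k + 1, by simpa using Nat.succ_lt_succ hk, by omega, by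
          simpa [List.getElem_cons_succ] using hkL⟩

/-- Good argument for `I`: assumptions avoid `I` and complements of conclusions avoid `I`. -/
def Good (P : Program) (I : Set Lit) (A : List Rule) : Prop :=
  IsArg P A ∧ (∀ L' ∈ assm A, L' ∉ I) ∧ (∀ L' ∈ conc A, L'.compl ∉ I)

lemma good_append {P : Program} {I : Set Lit} {A B : List Rule}
    (hA : Good P I A) (hB : Good P I B) : Good P I (A ++ B) := by
  obtain ⟨hA1, hA2, hA3⟩ := hA
  obtain ⟨hB1, hB2, hB3⟩ := hB
  refine ⟨isArg_append hA1 hB1, ?_, ?_⟩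
  · rintro L ⟨r, hr, hLr⟩
    rcases List.mem_append.mp hr with h | h
    · exact hA2 L ⟨r, h, hLr⟩
    · exact hB2 L ⟨r, h, hLr⟩
  · rintro L ⟨r, hr, hLr⟩
    rcases List.mem_append.mp hr with h | h
    · exact hA3 L ⟨r, h, hLr⟩
    · exact hB3 L ⟨r, h, hLr⟩

lemma combine (P : Program) (I : Set Lit) (ls : List Lit)
    (h : ∀ L ∈ ls, ∃ A, Good P I A ∧ L ∈ conc A) :
    ∃ B : List Rule, Good P I B ∧ ∀ L ∈ ls, L ∈ conc B := by
  induction ls with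
  | nil =>
      exact ⟨[], ⟨⟨by simp, by simp [isArg_iff]⟩, by rintro L ⟨s, hs, -⟩; simp at hs,
        by rintro L ⟨s, hs, -⟩; simp at hs⟩, by simp⟩
  | cons a as ihl =>
      obtain ⟨B, hB, hBc⟩ := ihl (fun L hL => h L (List.mem_cons_of_mem _ hL))
      obtain ⟨A, hA, hAc⟩ := h a (List.mem_cons_self)
      refine ⟨A ++ B, good_append hA hB, ?_⟩
      intro L hL
      rcases List.mem_cons.mp hL with rfl | hmem
      · obtain ⟨s, hs, hsh⟩ := hAc
        exact ⟨s, List.mem_append_left _ hs, hsh⟩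
      · obtain ⟨s, hs, hsh⟩ := hBc L hmem
        exact ⟨s, List.mem_append_right _ hs, hsh⟩

lemma forward (P : Program) (I : Set Lit) (L : Lit) (h : GammaDeriv (seminormal P) I L) :
    ∃ A : List Rule, Good P I A ∧ L ∈ conc A := by
  induction h with
  | step r' hr' hneg hpos ih =>
    obtain ⟨r, hr, rfl⟩ := hr'
    -- combine arguments for all pos literals of r
    obtain ⟨B, hB, hBc⟩ := combine P I r.pos (fun L hL => ih L hL)
    refine ⟨r :: B, ⟨isArg_cons hr hBc hB.1, ?_, ?_⟩, ⟨r, List.mem_cons_self, rfl⟩⟩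
    · rintro L' ⟨s, hs, hLs⟩
      rcases List.mem_cons.mp hs with rfl | h
      · exact hneg L' (List.mem_cons_of_mem _ hLs)
      · exact hB.2.1 L' ⟨s, h, hLs⟩
    · rintro L' ⟨s, hs, hLs⟩
      rcases List.mem_cons.mp hs with rfl | h
      · exact hLs ▸ hneg s.head.compl (List.mem_cons_self)
      · exact hB.2.2 L' ⟨s, h, hLs⟩

lemma backward (P : Program) (I : Set Lit) (A : List Rule) (hG : Good P I A) :
    ∀ L ∈ conc A, GammaDeriv (seminormal P) I L := by
  obtain ⟨hArg, hassm, hconc⟩ := hG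
  rw [isArg_iff] at hArg
  obtain ⟨h1, h2⟩ := hArg
  -- derive each head, by downward strong induction on index
  have key : ∀ n, ∀ i (hi : i < A.length), A.length - i ≤ n →
      GammaDeriv (seminormal P) I A[i].head := by
    intro n
    induction n with
    | zero => intro i hi h; omega
    | succ n ihn =>
      intro i hi hle
      set r := A[i] with hr
      have hr' : (⟨r.head, r.pos, r.head.compl :: r.neg⟩ : Rule) ∈ seminormal P :=
        ⟨r, h1 r (List.getElem_mem hi), rfl⟩
      have := GammaDeriv.step (P := seminormal P) (I := I)
        ⟨r.head, r.pos, r.head.compl :: r.neg⟩ hr' ?_ ?_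
      · exact this
      · intro L hL
        rcases List.mem_cons.mp hL with rfl | h
        · exact hconc r.head ⟨r, List.getElem_mem hi, rfl⟩
        · exact hassm L ⟨r, List.getElem_mem hi, h⟩
      · intro L hL
        obtain ⟨k, hk, hik, hkL⟩ := h2 i hi L hL
        exact hkL ▸ ihn k hk (by omega)
  rintro L ⟨r, hr, rfl⟩
  obtain ⟨j, hj, hjr⟩ := List.mem_iff_getElem.mp hr
  exact hjr ▸ key A.length j hj (by omega)

/-- For a two-valued interpretation (given by its set `I` of true objective
literals), `L ∈ Γ_s(I)` iff there is an argument for `L` whose assumptions all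
hold in the interpretation and none of whose conclusions has its explicit
negation in `I`. -/
theorem gammaS_iff_argument (P : Program) (I : Set Lit) (L : Lit) :
    L ∈ GammaS P I ↔
      ∃ A : List Rule, IsArg P A ∧ L ∈ conc A ∧
        (∀ L' ∈ assm A, L' ∉ I) ∧ (∀ L' ∈ conc A, L'.compl ∉ I) := by
  constructor
  · intro h
    obtain ⟨A, ⟨h1, h2, h3⟩, hL⟩ := forward P I L h
    exact ⟨A, h1, hL, h2, h3⟩
  · rintro ⟨A, h1, hL, h2, h3⟩
    exact backward P I A ⟨h1, h2, h3⟩ L hL
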